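/- Let Γ be a connected regular graph on vertex set X with adjacency matrix A having distinct eigenvalues θ₀ > θ₁ > ⋯ > θ_d with multiplicities m₀, m₁, …, m_d, and let p_d be the d-th predistance polynomial of Γ. Then for each i ∈ {1,…,d}, ∏_{j=1, j≠i}^d (θ₀ − θ_j)/(θ_i − θ_j) = − m_i · p_d(θ_i) / p_d(θ₀). -/

import Mathlib

open BigOperators Polynomial

section SpectralExcessHelpers
open Finset Matrix

section prior
variable {V : Type*} [Fintype V] [DecidableEq V]

lemma my_eval_charpoly {n : Type*} [Fintype n] [DecidableEq n] {R : Type*} [CommRing R]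
    (M : Matrix n n R) (r : R) :
    M.charpoly.eval r = (Matrix.diagonal (fun _ => r) - M).det := by
  rw [Matrix.charpoly, ← Polynomial.coe_evalRingHom, RingHom.map_det]
  congr 1
  ext i j
  by_cases h : i = j
  · subst h; simp [Matrix.charmatrix_apply_eq]
  · simp [Matrix.charmatrix_apply_ne _ _ _ h, Matrix.diagonal_apply_ne _ h]

lemma my_root_iff_eig {lam : ℝ} (A : Matrix V V ℝ) :
    A.charpoly.eval lam = 0 ↔ ∃ x : V → ℝ, x ≠ 0 ∧ A *ᵥ x = lam • x := by
  rw [my_eval_charpoly, ← Matrix.exists_mulVec_eq_zero_iff]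
  have key : ∀ x : V → ℝ, (Matrix.diagonal (fun _ => lam) - A) *ᵥ x = lam • x - A *ᵥ x := by
    intro x; ext v; simp [Matrix.sub_mulVec, Matrix.mulVec_diagonal]
  constructor
  · rintro ⟨x, hx0, hx⟩
    exact ⟨x, hx0, by rw [key] at hx; linear_combination (norm := module) -hx⟩
  · rintro ⟨x, hx0, hx⟩
    exact ⟨x, hx0, by rw [key, hx, sub_self]⟩

lemma my_eig_bound (G : SimpleGraph V) [DecidableRel G.Adj] {k : ℕ}
    (hreg : G.IsRegularOfDegree k) {x : V → ℝ} {lam : ℝ}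
    (hx : G.adjMatrix ℝ *ᵥ x = lam • x) (hx0 : x ≠ 0) : |lam| ≤ k := by
  obtain ⟨v₀, hv₀⟩ := Function.ne_iff.1 hx0
  obtain ⟨u, -, hmax⟩ := Finset.exists_max_image Finset.univ (fun v => |x v|) ⟨v₀, mem_univ _⟩
  have hu0 : 0 < |x u| := lt_of_lt_of_le (abs_pos.2 hv₀) (hmax v₀ (mem_univ _))
  have key : |lam| * |x u| ≤ (k : ℝ) * |x u| := by
    have h1 : (G.adjMatrix ℝ *ᵥ x) u = lam * x u := by rw [hx]; rfl
    have h2 : (G.adjMatrix ℝ *ᵥ x) u = ∑ w ∈ G.neighborFinset u, x w :=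
      G.adjMatrix_mulVec_apply _ _
    calc |lam| * |x u| = |∑ w ∈ G.neighborFinset u, x w| := by
          rw [← abs_mul, ← h1, h2]
      _ ≤ ∑ w ∈ G.neighborFinset u, |x w| := Finset.abs_sum_le_sum_abs _ _
      _ ≤ ∑ _w ∈ G.neighborFinset u, |x u| :=
          Finset.sum_le_sum fun w _ => hmax w (mem_univ _)
      _ = (k : ℝ) * |x u| := by
          rw [Finset.sum_const, G.card_neighborFinset_eq_degree, hreg u, nsmul_eq_mul]
  exact le_of_mul_le_mul_right key hu0

lemma my_eig_const (G : SimpleGraph V) [DecidableRel G.Adj] {k : ℕ}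
    (hreg : G.IsRegularOfDegree k) (hconn : G.Connected) {x : V → ℝ}
    (hx : G.adjMatrix ℝ *ᵥ x = (k : ℝ) • x) : ∀ u v, x u = x v := by
  have : Nonempty V := hconn.nonempty
  obtain ⟨u₀, -, hmax⟩ := Finset.exists_max_image Finset.univ x univ_nonempty
  have step : ∀ {a b : V}, G.Adj a b → x a = x u₀ → x b = x u₀ := by
    intro a b hab ha
    have hsum : ∑ w ∈ G.neighborFinset a, (x u₀ - x w) = 0 := by
      have h1 : (G.adjMatrix ℝ *ᵥ x) a = (k : ℝ) * x a := by rw [hx]; rfl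
      have h2 : (G.adjMatrix ℝ *ᵥ x) a = ∑ w ∈ G.neighborFinset a, x w :=
        G.adjMatrix_mulVec_apply _ _
      rw [Finset.sum_sub_distrib, Finset.sum_const, ← h2, h1, ha,
        G.card_neighborFinset_eq_degree, hreg a, nsmul_eq_mul]
      ring
    have := (Finset.sum_eq_zero_iff_of_nonneg
      (fun w _ => sub_nonneg.2 (hmax w (mem_univ _)))).1 hsum b
      ((G.mem_neighborFinset a b).2 hab)
    linarith [this]
  have hall' : ∀ {a v : V}, G.Walk a v → x a = x u₀ → x v = x u₀ := by
    intro a v w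
    induction w with
    | nil => exact id
    | cons hadj _ ih => exact fun ha => ih (step hadj ha)
  have hall : ∀ v, x v = x u₀ := fun v => hall' (hconn u₀ v).some rfl
  intro u v; rw [hall u, hall v]

lemma my_herm_charpoly {n : Type*} [Fintype n] [DecidableEq n] {A : Matrix n n ℝ}
    (hA : A.IsHermitian) : A.charpoly = ∏ v, (X - C (hA.eigenvalues v)) := by
  apply Polynomial.funext
  intro r
  rw [my_eval_charpoly]
  set U : Matrix n n ℝ := (hA.eigenvectorUnitary : Matrix n n ℝ) with hU
  have hUU : U * star U = 1 := (Matrix.mem_unitaryGroup_iff).mp hA.eigenvectorUnitary.2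
  have hD : A = U * Matrix.diagonal hA.eigenvalues * star U := by
    have := hA.spectral_theorem
    simpa using this
  have hdiag : Matrix.diagonal (fun _ : n => r) - A
      = U * (Matrix.diagonal (fun _ : n => r) - Matrix.diagonal hA.eigenvalues) * star U := by
    rw [Matrix.mul_sub, Matrix.sub_mul, ← hD]
    congr 1
    have : Matrix.diagonal (fun _ : n => r) = r • (1 : Matrix n n ℝ) := by
      simp [Matrix.smul_one_eq_diagonal]
    rw [this, Matrix.mul_smul, Matrix.mul_one, Matrix.smul_mul, hUU]
  rw [hdiag, Matrix.det_mul, Matrix.det_mul, mul_comm (U.det), mul_assoc, ← Matrix.det_mul, hUU]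
  simp [Matrix.diagonal_sub, Polynomial.eval_prod]

end prior

lemma my_m0 {V : Type*} [Fintype V] [DecidableEq V]
    (G : SimpleGraph V) [DecidableRel G.Adj] (k d : ℕ)
    (hconn : G.Connected) (hreg : G.IsRegularOfDegree k)
    (θ : Fin (d + 1) → ℝ) (m : Fin (d + 1) → ℕ)
    (hθ : StrictAnti θ) (hm : ∀ i, 0 < m i)
    (hspec : (G.adjMatrix ℝ).charpoly = ∏ i, (X - C (θ i)) ^ m i) :
    m 0 = 1 := by
  classical
  have hne : Nonempty V := hconn.nonempty
  set A := G.adjMatrix ℝ with hA_def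
  have hherm : A.IsHermitian := by
    rw [Matrix.IsHermitian]
    ext i j
    simp [hA_def, Matrix.conjTranspose_apply, SimpleGraph.adjMatrix_apply, SimpleGraph.adj_comm]
  -- evaluation of the charpoly
  have heval : ∀ r : ℝ, A.charpoly.eval r = ∏ i, (r - θ i) ^ m i := by
    intro r; rw [hspec]; simp [Polynomial.eval_prod]
  -- k is a root
  have hkroot : A.charpoly.eval (k : ℝ) = 0 := by
    rw [my_root_iff_eig]
    refine ⟨fun _ => 1, ?_, ?_⟩
    · intro h
      obtain ⟨v⟩ := hne
      exact one_ne_zero (congrFun h v)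
    · ext v
      simp [hA_def, G.adjMatrix_mulVec_apply, hreg v]
  -- hence k = θ i₀ for some i₀
  obtain ⟨i₀, -, hi₀⟩ : ∃ i₀ ∈ Finset.univ, ((k : ℝ) - θ i₀) ^ m i₀ = 0 := by
    rw [heval] at hkroot
    exact Finset.prod_eq_zero_iff.1 hkroot
  have hθi₀ : θ i₀ = k := by
    have := pow_eq_zero_iff (hm i₀).ne' |>.1 hi₀
    linarith [sub_eq_zero.1 this]
  -- every θ i is at most k
  have hθle : ∀ i, θ i ≤ (k : ℝ) := by
    intro i
    have hroot : A.charpoly.eval (θ i) = 0 := by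
      rw [heval]
      exact Finset.prod_eq_zero (mem_univ i) (by simp [(hm i).ne'])
    obtain ⟨x, hx0, hx⟩ := (my_root_iff_eig A).1 hroot
    exact le_trans (le_abs_self _) (my_eig_bound G hreg hx hx0)
  have hθ0 : θ 0 = (k : ℝ) :=
    le_antisymm (hθle 0) (hθi₀ ▸ hθ.antitone (Fin.zero_le i₀))
  -- factorization over eigenvalues
  have hch2 : A.charpoly = ∏ v, (X - C (hherm.eigenvalues v)) := my_herm_charpoly hherm
  set ev := hherm.eigenvalues with hev
  -- count the root θ 0 on both sides
  have hne1 : (∏ i : Fin (d + 1), (X - C (θ i)) ^ m i) ≠ 0 :=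
    (monic_prod_of_monic _ _ fun i _ => (monic_X_sub_C _).pow _).ne_zero
  have hroots1 : (∏ i : Fin (d + 1), (X - C (θ i)) ^ m i).roots
      = Finset.univ.val.bind fun i => (m i) • {θ i} := by
    rw [Polynomial.roots_prod _ _ hne1]
    congr 1
    funext i
    rw [Polynomial.roots_pow, Polynomial.roots_X_sub_C]
  have hcount1 : ((∏ i : Fin (d + 1), (X - C (θ i)) ^ m i).roots).count (θ 0) = m 0 := by
    rw [hroots1, Multiset.count_bind]
    have : (Finset.univ.val.map fun i => Multiset.count (θ 0) ((m i) • {θ i}))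
        = Finset.univ.val.map fun i : Fin (d + 1) => if i = 0 then m 0 else 0 := by
      congr 1
      funext i
      rw [Multiset.count_nsmul, Multiset.count_singleton]
      by_cases h : i = 0
      · subst h; simp
      · have : θ 0 ≠ θ i := fun hc => h (hθ.injective hc).symm
        simp [this, h]
    rw [this]
    have h2 : (Finset.univ.val.map fun i : Fin (d + 1) => if i = 0 then m 0 else 0).sum
        = ∑ i : Fin (d + 1), if i = 0 then m 0 else 0 := rfl
    rw [h2]
    simp
  have hprod2 : (∏ v : V, (X - C (ev v)))
      = ((Finset.univ.val.map ev).map fun a : ℝ => X - C a).prod := by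
    rw [Multiset.map_map]
    rfl
  have hroots2 : (∏ v : V, (X - C (ev v))).roots = Finset.univ.val.map ev := by
    rw [hprod2, Polynomial.roots_multiset_prod_X_sub_C]
  have hcount2 : m 0 = Multiset.card ((Finset.univ.val : Multiset V).filter fun v => θ 0 = ev v) := by
    rw [← hcount1, ← hspec, hch2, hroots2, Multiset.count_map]
  obtain ⟨u₀⟩ := hne
  set b := hherm.eigenvectorBasis with hb
  have horth := hherm.eigenvectorBasis.orthonormal
  have hconst : ∀ j : V, θ 0 = ev j →
      ∀ u v : V, (b j : EuclideanSpace ℝ V) u = (b j : EuclideanSpace ℝ V) v := by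
    intro j hj
    apply my_eig_const G hreg hconn
    have h1 := hherm.mulVec_eigenvectorBasis j
    have h2 : hherm.eigenvalues j = (k : ℝ) := by rw [← hev, ← hj, hθ0]
    rw [h2] at h1
    exact h1
  have hnz : ∀ j : V, θ 0 = ev j → (b j : EuclideanSpace ℝ V) u₀ ≠ 0 := by
    intro j hj hc0
    have hzero : (b j : EuclideanSpace ℝ V) = 0 := by
      ext u
      rw [hconst j hj u u₀, hc0]
      rfl
    have hn1 := horth.1 j
    rw [show ⇑hherm.eigenvectorBasis j = b j from rfl, hzero, norm_zero] at hn1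
    exact one_ne_zero hn1.symm
  have huniq : ∀ v₁ ∈ Finset.univ.filter (fun v => θ 0 = ev v),
      ∀ v₂ ∈ Finset.univ.filter (fun v => θ 0 = ev v), v₁ = v₂ := by
    intro v₁ hv₁ v₂ hv₂
    by_contra hne12
    simp only [Finset.mem_filter, Finset.mem_univ, true_and] at hv₁ hv₂
    have hizero : (inner ℝ (b v₁) (b v₂) : ℝ) = 0 := horth.2 hne12
    rw [PiLp.inner_apply] at hizero
    have hsum : ∑ u : V, (b v₁ : EuclideanSpace ℝ V) u * (b v₂ : EuclideanSpace ℝ V) u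
        = (Fintype.card V : ℝ) *
          ((b v₁ : EuclideanSpace ℝ V) u₀ * (b v₂ : EuclideanSpace ℝ V) u₀) := by
      rw [Finset.sum_congr rfl fun u _ => by rw [hconst v₁ hv₁ u u₀, hconst v₂ hv₂ u u₀]]
      rw [Finset.sum_const, Finset.card_univ, nsmul_eq_mul]
    simp only [RCLike.inner_apply, starRingEnd_apply, star_trivial] at hizero
    rw [Finset.sum_congr rfl fun u _ => mul_comm ((b v₂ : EuclideanSpace ℝ V) u) _, hsum] at hizero
    have : Nonempty V := ⟨u₀⟩
    rcases mul_eq_zero.1 hizero with h | h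
    · exact absurd h (Nat.cast_ne_zero.2 Fintype.card_ne_zero)
    · exact mul_ne_zero (hnz v₁ hv₁) (hnz v₂ hv₂) h
  have hle1 : (Finset.univ.filter fun v => θ 0 = ev v).card ≤ 1 := Finset.card_le_one.2 huniq
  have hcard_eq : Multiset.card (Multiset.filter (fun v => θ 0 = ev v) Finset.univ.val)
      = (Finset.univ.filter fun v => θ 0 = ev v).card := by
    rw [Finset.card, Finset.filter_val]
  rw [hcard_eq] at hcount2
  have := hm 0
  omega

end SpectralExcessHelpers

/-- Spectral excess identity: let `G` be a connected regular graph with strictly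
decreasing distinct eigenvalues `θ₀ > ⋯ > θ_d` of multiplicities `m i` (encoded by the
characteristic polynomial of the adjacency matrix), and let `p` be the `d`-th predistance
polynomial (degree `d`, orthogonal to all polynomials of lower degree for the spectral
inner product, with `⟨p,p⟩ = p(θ₀)`). Then for each `i ∈ {1,…,d}`,
`∏_{j=1, j≠i}^d (θ₀ − θ_j)/(θ_i − θ_j) = − m_i p(θ_i)/p(θ₀)`. -/
theorem stmt1 {V : Type*} [Fintype V] [DecidableEq V]
    (G : SimpleGraph V) [DecidableRel G.Adj] (k d : ℕ) (hd : 1 ≤ d)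
    (hconn : G.Connected) (hreg : G.IsRegularOfDegree k)
    (θ : Fin (d + 1) → ℝ) (m : Fin (d + 1) → ℕ)
    (hθ : StrictAnti θ) (hm : ∀ i, 0 < m i)
    (hspec : (G.adjMatrix ℝ).charpoly = ∏ i, (X - C (θ i)) ^ m i)
    (p : Polynomial ℝ) (hpdeg : p.natDegree = d)
    (horth : ∀ q : Polynomial ℝ, q.natDegree < d →
      ∑ i, (m i : ℝ) * p.eval (θ i) * q.eval (θ i) = 0)
    (hnorm : ∑ i, (m i : ℝ) * p.eval (θ i) ^ 2 = (Fintype.card V : ℝ) * p.eval (θ 0))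
    (i : Fin (d + 1)) (hi : i ≠ 0) :
    ∏ j ∈ (Finset.univ.erase 0).erase i, (θ 0 - θ j) / (θ i - θ j) =
      - (m i : ℝ) * p.eval (θ i) / p.eval (θ 0) := by
  have hm0 : m 0 = 1 := my_m0 G k d hconn hreg θ m hθ hm hspec
  -- p (θ 0) ≠ 0
  have hp0 : p.eval (θ 0) ≠ 0 := by
    intro h0
    have hz : ∀ j ∈ Finset.univ, (m j : ℝ) * p.eval (θ j) ^ 2 = 0 := by
      refine (Finset.sum_eq_zero_iff_of_nonneg fun j _ => by positivity).1 ?_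
      rw [hnorm, h0, mul_zero]
    have hpz : ∀ j, p.eval (θ j) = 0 := by
      intro j
      have := hz j (Finset.mem_univ j)
      have hmj : (m j : ℝ) ≠ 0 := Nat.cast_ne_zero.2 (hm j).ne'
      have := (mul_eq_zero.1 this).resolve_left hmj
      exact pow_eq_zero_iff two_ne_zero |>.1 this
    have hp : p = 0 := by
      refine Polynomial.eq_zero_of_natDegree_lt_card_of_eval_eq_zero p hθ.injective hpz ?_
      rw [hpdeg, Fintype.card_fin]
      omega
    rw [hp, Polynomial.natDegree_zero] at hpdeg
    omega
  set S := (Finset.univ.erase (0 : Fin (d + 1))).erase i with hS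
  have hiS : i ∈ Finset.univ.erase (0 : Fin (d + 1)) :=
    Finset.mem_erase.2 ⟨hi, Finset.mem_univ _⟩
  have hScard : S.card = d - 1 := by
    rw [hS, Finset.card_erase_of_mem hiS, Finset.card_erase_of_mem (Finset.mem_univ _),
      Finset.card_univ, Fintype.card_fin]
    omega
  set h : Polynomial ℝ := ∏ j ∈ S, (X - C (θ j)) with hh
  have hhdeg : h.natDegree = d - 1 := by
    rw [hh, Polynomial.natDegree_prod _ _ fun j _ => X_sub_C_ne_zero (θ j)]
    simp only [Polynomial.natDegree_X_sub_C]
    rw [Finset.sum_const, smul_eq_mul, mul_one, hScard]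
  have hsum := horth h (by omega)
  rw [← Finset.add_sum_erase _ _ (Finset.mem_univ (0 : Fin (d + 1)))] at hsum
  rw [← Finset.add_sum_erase _ _ hiS] at hsum
  have hzS : ∀ j ∈ S, (m j : ℝ) * p.eval (θ j) * h.eval (θ j) = 0 := by
    intro j hj
    have : h.eval (θ j) = 0 := by
      rw [hh, Polynomial.eval_prod]
      exact Finset.prod_eq_zero hj (by simp)
    rw [this, mul_zero]
  rw [← hS, Finset.sum_eq_zero hzS] at hsum
  have e0 : h.eval (θ 0) = ∏ j ∈ S, (θ 0 - θ j) := by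
    rw [hh, Polynomial.eval_prod]; simp
  have ei : h.eval (θ i) = ∏ j ∈ S, (θ i - θ j) := by
    rw [hh, Polynomial.eval_prod]; simp
  rw [e0, ei, hm0] at hsum
  have hkey : p.eval (θ 0) * ∏ j ∈ S, (θ 0 - θ j)
      + (m i : ℝ) * p.eval (θ i) * ∏ j ∈ S, (θ i - θ j) = 0 := by
    push_cast at hsum
    linarith
  have hPine : (∏ j ∈ S, (θ i - θ j)) ≠ 0 := by
    refine Finset.prod_ne_zero_iff.2 fun j hj => sub_ne_zero.2 fun hc => ?_
    exact (Finset.mem_erase.1 hj).1 (hθ.injective hc).symm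
  rw [Finset.prod_div_distrib, div_eq_div_iff hPine hp0]
  linear_combination hkey
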